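/- Let A ↪ X be a cofibration of directed graphs, ℓ ≥ 0, x ∈ X∖A, a ∈ A, and assume a ≠ π(x) or ℓ ≠ d(a,x). Then the complex A_{*,ℓ}(a,x) (spanned by tuples (x₀,...,x_k) of length ℓ with x₀=a, x_k=x, and intermediate entries in A) is acyclic; an explicit contracting homotopy is s(x₀,...,x_k) = (-1)^k(x₀,...,x_{k-1},π(x_k),x_k) if x_{k-1} ≠ π(x_k) and 0 otherwise. -/

import Mathlib

open scoped Classical

/-- A directed graph on a vertex type `V` (loops allowed, no parallel edges). -/
structure DGraph (V : Type) where
  Adj : V → V → Prop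

namespace DGraph
variable {V : Type}

/-- There is a directed path of length `n` (i.e. with `n` edges) from `x` to `y`. -/
def PathLen (G : DGraph V) (x y : V) (n : ℕ) : Prop :=
  ∃ f : ℕ → V, f 0 = x ∧ f n = y ∧ ∀ i < n, G.Adj (f i) (f (i + 1))

/-- The shortest path metric, with values in `ℕ∞ = ℕ ∪ {∞}`. -/
noncomputable def edist (G : DGraph V) (x y : V) : ℕ∞ :=
  sInf {n : ℕ∞ | ∃ m : ℕ, n = m ∧ G.PathLen x y m}

/-- The length of a tuple of vertices: the sum of consecutive distances. -/
noncomputable def tlen (G : DGraph V) {k : ℕ} (f : Fin (k + 1) → V) : ℕ∞ :=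
  ∑ i : Fin k, G.edist (f i.castSucc) (f i.succ)

/-- `y` is reachable from `x` by a directed path. -/
def Reaches (G : DGraph V) (x y : V) : Prop := Relation.ReflTransGen G.Adj x y

/-- The induced subgraph on a set of vertices. -/
def induce (G : DGraph V) (A : Set V) : DGraph A := ⟨fun a b => G.Adj a.1 b.1⟩

end DGraph

variable {V : Type}

/-- Validity of a tuple as a magnitude-chain basis element of degree `k` and length `ℓ`:
consecutive entries are distinct, at finite distance, and the total length is `ℓ`. -/
def MCValid (G : DGraph V) (k ℓ : ℕ) (f : Fin (k + 1) → V) : Prop :=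
  (∀ i : Fin k, G.edist (f i.castSucc) (f i.succ) ≠ 0 ∧ G.edist (f i.castSucc) (f i.succ) ≠ ⊤) ∧
    G.tlen f = (ℓ : ℕ∞)

/-- Basis of the magnitude chain group `MC_{k,ℓ}(G)`. -/
def MCb (G : DGraph V) (k ℓ : ℕ) : Type := {f : Fin (k + 1) → V // MCValid G k ℓ f}

/-- The magnitude chain group `MC_{k,ℓ}(G)` with coefficients in `R`. -/
abbrev MCMod (R : Type) [CommRing R] (G : DGraph V) (k ℓ : ℕ) := MCb G k ℓ →₀ R

/-- Deletion of the interior entry in position `j+1` of a `(k+2)`-tuple. -/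
def delMid {k : ℕ} (f : Fin (k + 2) → V) (j : Fin k) : Fin (k + 1) → V :=
  f ∘ (Fin.succAbove j.succ.castSucc)

/-- The magnitude-chain differential `MC_{k+1,ℓ}(G) → MC_{k,ℓ}(G)`: delete interior
entries with alternating signs, omitting any length-decreasing term. -/
noncomputable def dMC (R : Type) [CommRing R] (G : DGraph V) (k ℓ : ℕ) :
    MCMod R G (k + 1) ℓ →ₗ[R] MCMod R G k ℓ :=
  Finsupp.lsum R fun b => LinearMap.toSpanSingleton R _
    (∑ j : Fin k, (-1 : R) ^ ((j : ℕ) + 1) •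
      (if h : MCValid G k ℓ (delMid b.1 j) then
        Finsupp.single (⟨delMid b.1 j, h⟩ : MCb G k ℓ) (1 : R) else 0))

/-- The outgoing magnitude differential from degree `k` (zero in degree `0`). -/
noncomputable def dMCOut (R : Type) [CommRing R] (G : DGraph V) (ℓ : ℕ) :
    (k : ℕ) → MCMod R G k ℓ →ₗ[R] MCMod R G (k - 1) ℓ
  | 0 => 0
  | (k + 1) => dMC R G k ℓ

/-- Magnitude homology `MH_{k,ℓ}(G)` with coefficients in `R`. -/
noncomputable abbrev MH (R : Type) [CommRing R] (G : DGraph V) (k ℓ : ℕ) :=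
  letI : HasQuotient (LinearMap.ker (dMCOut R G ℓ k))
      (Submodule R (LinearMap.ker (dMCOut R G ℓ k))) :=
      Submodule.hasQuotient (R := R) (M := LinearMap.ker (dMCOut R G ℓ k))
  LinearMap.ker (dMCOut R G ℓ k) ⧸
    (LinearMap.range (dMCOut R G ℓ (k + 1))).comap (LinearMap.ker (dMCOut R G ℓ k)).subtype

/-- Embedding of the magnitude chains into the free module on all tuples of vertices. -/
noncomputable def eMC (R : Type) [CommRing R] (G : DGraph V) (k ℓ : ℕ) :
    MCMod R G k ℓ →ₗ[R] ((Fin (k + 1) → V) →₀ R) :=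
  Finsupp.lmapDomain R R Subtype.val

/-- Basis of a subcomplex of the magnitude chains, cut out by a predicate `P` on tuples
(assumed closed under the interior deletions appearing in the differential). -/
def RCb (G : DGraph V) (P : ∀ k, (Fin (k + 1) → V) → Prop) (k ℓ : ℕ) : Type :=
  {f : Fin (k + 1) → V // MCValid G k ℓ f ∧ P k f}

/-- The degree-`k`, length-`ℓ` chain group of the subcomplex cut out by `P`. -/
abbrev RMod (R : Type) [CommRing R] (G : DGraph V) (P : ∀ k, (Fin (k + 1) → V) → Prop)
    (k ℓ : ℕ) := RCb G P k ℓ →₀ R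

/-- The differential of the subcomplex cut out by `P`. -/
noncomputable def dR (R : Type) [CommRing R] (G : DGraph V)
    (P : ∀ k, (Fin (k + 1) → V) → Prop) (k ℓ : ℕ) :
    RMod R G P (k + 1) ℓ →ₗ[R] RMod R G P k ℓ :=
  Finsupp.lsum R fun b => LinearMap.toSpanSingleton R _
    (∑ j : Fin k, (-1 : R) ^ ((j : ℕ) + 1) •
      (if h : MCValid G k ℓ (delMid b.1 j) ∧ P k (delMid b.1 j) then
        Finsupp.single (⟨delMid b.1 j, h⟩ : RCb G P k ℓ) (1 : R) else 0))

/-- The outgoing differential of the subcomplex from degree `k` (zero in degree `0`). -/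
noncomputable def dROut (R : Type) [CommRing R] (G : DGraph V)
    (P : ∀ k, (Fin (k + 1) → V) → Prop) (ℓ : ℕ) :
    (k : ℕ) → RMod R G P k ℓ →ₗ[R] RMod R G P (k - 1) ℓ
  | 0 => 0
  | (k + 1) => dR R G P k ℓ

/-- The degree-`k`, length-`ℓ` homology of the subcomplex cut out by `P`. -/
noncomputable abbrev RH (R : Type) [CommRing R] (G : DGraph V)
    (P : ∀ k, (Fin (k + 1) → V) → Prop) (k ℓ : ℕ) :=
  letI : HasQuotient (LinearMap.ker (dROut R G P ℓ k))
      (Submodule R (LinearMap.ker (dROut R G P ℓ k))) :=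
      Submodule.hasQuotient (R := R) (M := LinearMap.ker (dROut R G P ℓ k))
  LinearMap.ker (dROut R G P ℓ k) ⧸
    (LinearMap.range (dROut R G P ℓ (k + 1))).comap (LinearMap.ker (dROut R G P ℓ k)).subtype

/-- Embedding of the subcomplex chains into the free module on all tuples of vertices. -/
noncomputable def eR (R : Type) [CommRing R] (G : DGraph V)
    (P : ∀ k, (Fin (k + 1) → V) → Prop) (k ℓ : ℕ) :
    RMod R G P k ℓ →ₗ[R] ((Fin (k + 1) → V) →₀ R) :=
  Finsupp.lmapDomain R R Subtype.val

/-- `A ⊆ V`, with projection `π`, is a cofibration in `G`: an induced subgraph inclusion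
with no edges from outside `A` into `A`, such that every vertex `x` in the reach of `A`
has a projection `π x ∈ A` with `d(a,x) = d(a,π x) + d(π x,x)` for all `a ∈ A`. -/
def IsCofib (G : DGraph V) (A : Set V) (π : V → V) : Prop :=
  (∀ u v : V, u ∉ A → v ∈ A → ¬ G.Adj u v) ∧
  (∀ x : V, (∃ a ∈ A, G.Reaches a x) →
    π x ∈ A ∧ ∀ a ∈ A, G.edist a x = G.edist a (π x) + G.edist (π x) x)

/-- The predicate cutting out the subcomplex `A_{*,ℓ}(a,x)` of `MC_{*,ℓ}(X)`: tuples
starting at `a`, ending at `x`, with all intermediate entries in `A`. -/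
def AP (A : Set V) (a x : V) : ∀ k, (Fin (k + 1) → V) → Prop :=
  fun k f => f 0 = a ∧ f (Fin.last k) = x ∧
    ∀ i : Fin (k + 1), i ≠ 0 → i ≠ Fin.last k → f i ∈ A

/-- The tuple `(x₀, ..., x_{k-1}, π(x_k), x_k)` obtained from `(x₀, ..., x_k)` by
inserting the projection of the last entry before it. -/
def sTuple (p : V → V) {k : ℕ} (f : Fin (k + 1) → V) : Fin (k + 2) → V :=
  fun i => if _h : (i : ℕ) < k then f ⟨i, by omega⟩
    else if (i : ℕ) = k then p (f (Fin.last k)) else f (Fin.last k)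

attribute [reducible] RCb

section AuxLemmas

variable {V : Type}

lemma edist_eq_zero_iff (G : DGraph V) (u v : V) : G.edist u v = 0 ↔ u = v := by
  constructor
  · intro h
    by_contra hne
    have h1 : (1 : ℕ∞) ≤ G.edist u v := by
      apply le_sInf
      rintro n ⟨m, rfl, hm⟩
      rcases Nat.eq_zero_or_pos m with rfl | hp
      · obtain ⟨g, h0, hn, _⟩ := hm
        exact absurd (h0 ▸ hn : u = v) hne
      · exact_mod_cast hp
    rw [h] at h1
    simp at h1
  · rintro rfl
    refine le_antisymm ?_ zero_le
    refine sInf_le ⟨0, by simp, ⟨fun _ => u, rfl, rfl, by simp⟩⟩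

lemma edist_ne_zero_of_ne {G : DGraph V} {u v : V} (h : u ≠ v) : G.edist u v ≠ 0 :=
  fun h0 => h ((edist_eq_zero_iff G u v).mp h0)

lemma delMid_apply {k : ℕ} (f : Fin (k + 2) → V) (j : Fin k) (i : Fin (k + 1)) :
    delMid f j i = if (i : ℕ) < (j : ℕ) + 1 then f i.castSucc else f i.succ := by
  show f (Fin.succAbove j.succ.castSucc i) = _
  rw [Fin.succAbove]
  by_cases h : (i : ℕ) < (j : ℕ) + 1
  · rw [if_pos h, if_pos]
    simpa [Fin.lt_def] using h
  · rw [if_neg h, if_neg]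
    simpa [Fin.lt_def] using h

lemma sTuple_apply (p : V → V) {k : ℕ} (f : Fin (k + 1) → V) (i : Fin (k + 2)) :
    sTuple p f i = if h : (i : ℕ) < k then f ⟨i, by omega⟩
      else if (i : ℕ) = k then p (f (Fin.last k)) else f (Fin.last k) := rfl


variable {G : DGraph V} {A : Set V} {pp : V → V} {x a : V}

lemma AP_sndlast_mem (ha : a ∈ A) {k : ℕ} {f : Fin (k + 1) → V} (hf : AP A a x k f) :
    f ⟨k - 1, Nat.lt_succ_of_le (Nat.sub_le k 1)⟩ ∈ A := by
  rcases Nat.eq_zero_or_pos (k - 1) with h | h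
  · have h0 : (⟨k - 1, Nat.lt_succ_of_le (Nat.sub_le k 1)⟩ : Fin (k + 1)) = 0 := by simp [Fin.ext_iff, h]
    rw [h0, hf.1]; exact ha
  · refine hf.2.2 _ ?_ ?_
    · simp [Fin.ext_iff]; omega
    · simp [Fin.ext_iff, Fin.last]; omega

lemma AP_delMid {k : ℕ} {f : Fin (k + 2) → V} (hf : AP A a x (k + 1) f) (j : Fin k) :
    AP A a x k (delMid f j) := by
  obtain ⟨h0, hl, hm⟩ := hf
  refine ⟨?_, ?_, ?_⟩
  · rw [delMid_apply, if_pos (by simp)]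
    simpa using h0
  · rw [delMid_apply, if_neg (by simp [Fin.last])]
    rw [Fin.succ_last]; exact hl
  · intro i hi0 hil
    have hv0 : (i : ℕ) ≠ 0 := fun h => hi0 (Fin.ext (by simp [h]))
    have hvl : (i : ℕ) ≠ k := by simpa [Fin.ext_iff, Fin.last] using hil
    rw [delMid_apply]
    split_ifs with h
    · exact hm _ (by intro h; exact hv0 (by simpa using congrArg Fin.val h)) (by simp [Fin.ext_iff, Fin.last]; omega)
    · exact hm _ (Fin.succ_ne_zero _) (by simp [Fin.ext_iff, Fin.last]; omega)

lemma AP_sTuple (hx : x ∉ A) (ha : a ∈ A) (hpA : pp x ∈ A) {k : ℕ} {f : Fin (k + 1) → V}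
    (hf : AP A a x k f) : AP A a x (k + 1) (sTuple pp f) := by
  rcases k with _ | m
  · have hax : a = x := by rw [← hf.1, ← hf.2.1]; rfl
    exact absurd (hax ▸ ha) hx
  have hlast : f (Fin.last (m + 1)) = x := hf.2.1
  refine ⟨?_, ?_, ?_⟩
  · rw [sTuple_apply, dif_pos (by simp)]
    exact (congrArg f (Fin.ext (by simp))).trans hf.1
  · rw [sTuple_apply, dif_neg (by simp [Fin.last]), if_neg (by simp [Fin.last]), hlast]
  · intro i hi0 hil
    have hv0 : (i : ℕ) ≠ 0 := fun h => hi0 (Fin.ext (by simp [h]))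
    have hvl : (i : ℕ) ≠ m + 2 := by simpa [Fin.ext_iff, Fin.last] using hil
    have hle : (i : ℕ) ≤ m + 2 := by omega
    rw [sTuple_apply]
    split_ifs with h1 h2
    · exact hf.2.2 _ (by intro h; exact hv0 (by simpa using congrArg Fin.val h)) (by simp [Fin.ext_iff, Fin.last]; omega)
    · rw [hlast]; exact hpA
    · omega

lemma sTuple_equiv (hco : IsCofib G A pp) (hx : x ∉ A) (hr : ∃ a ∈ A, G.Reaches a x)
    (ha : a ∈ A) (ℓ : ℕ) {k : ℕ} {f : Fin (k + 1) → V} (hf : AP A a x k f) :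
    (MCValid G (k + 1) ℓ (sTuple pp f) ∧ AP A a x (k + 1) (sTuple pp f)) ↔
      (MCValid G k ℓ f ∧ f ⟨k - 1, Nat.lt_succ_of_le (Nat.sub_le k 1)⟩ ≠ pp x) := by
  obtain ⟨hpA, hsplit⟩ := hco.2 x hr
  have hpx : pp x ≠ x := fun h => hx (h ▸ hpA)
  rcases k with _ | m
  · have hax : a = x := by rw [← hf.1, ← hf.2.1]; rfl
    exact absurd (hax ▸ ha) hx
  have hlast : f (Fin.last (m + 1)) = x := hf.2.1
  set st := sTuple pp f with hst
  set jm : Fin (m + 2) := ⟨m, by omega⟩ with hjm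
  have hslA : f jm ∈ A := by
    have := AP_sndlast_mem ha hf
    rwa [show (⟨m + 1 - 1, by omega⟩ : Fin (m + 2)) = jm by simp [Fin.ext_iff, hjm]] at this
  have key : G.edist (f jm) x = G.edist (f jm) (pp x) + G.edist (pp x) x := hsplit _ hslA
  have hv : ∀ (i : Fin (m + 3)) (j : Fin (m + 2)), (i : ℕ) = (j : ℕ) → (j : ℕ) < m + 1 →
      st i = f j := by
    intro i j hij h
    rw [hst, sTuple_apply, dif_pos (by omega)]
    exact congrArg f (Fin.ext hij)
  have hvm : ∀ (i : Fin (m + 3)), (i : ℕ) = m + 1 → st i = pp x := by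
    intro i h
    rw [hst, sTuple_apply, dif_neg (by omega), if_pos h, hlast]
  have hvl : ∀ (i : Fin (m + 3)), (i : ℕ) = m + 2 → st i = x := by
    intro i h
    rw [hst, sTuple_apply, dif_neg (by omega), if_neg (by omega), hlast]
  -- distance terms of st
  have tst_lo : ∀ (i : Fin (m + 2)) (h : (i : ℕ) < m),
      G.edist (st i.castSucc) (st i.succ)
        = G.edist (f ⟨i, by omega⟩) (f ⟨(i : ℕ) + 1, by omega⟩) := by
    intro i h
    rw [hv i.castSucc ⟨i, by omega⟩ (by simp) (by simp; omega),
      hv i.succ ⟨(i : ℕ) + 1, by omega⟩ (by simp) (by simp; omega)]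
  have tst_m : ∀ (i : Fin (m + 2)), (i : ℕ) = m →
      G.edist (st i.castSucc) (st i.succ) = G.edist (f jm) (pp x) := by
    intro i h
    rw [hv i.castSucc jm (by simp [h, hjm]) (by simp [hjm]), hvm i.succ (by simp [h])]
  have tst_hi : ∀ (i : Fin (m + 2)), (i : ℕ) = m + 1 →
      G.edist (st i.castSucc) (st i.succ) = G.edist (pp x) x := by
    intro i h
    rw [hvm i.castSucc (by simp [h]), hvl i.succ (by simp [h])]
  -- distance terms of f
  have tf_lo : ∀ (i : Fin (m + 1)) (h : (i : ℕ) < m),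
      G.edist (f i.castSucc) (f i.succ)
        = G.edist (f ⟨i, by omega⟩) (f ⟨(i : ℕ) + 1, by omega⟩) := by
    intro i h
    rw [show i.castSucc = (⟨(i : ℕ), by omega⟩ : Fin (m + 2)) by simp [Fin.ext_iff],
      show i.succ = (⟨(i : ℕ) + 1, by omega⟩ : Fin (m + 2)) by simp [Fin.ext_iff]]
  have tf_m : ∀ (i : Fin (m + 1)), (i : ℕ) = m →
      G.edist (f i.castSucc) (f i.succ) = G.edist (f jm) x := by
    intro i h
    rw [show i.castSucc = jm by simp [Fin.ext_iff, hjm, h],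
      show i.succ = Fin.last (m + 1) by simp [Fin.ext_iff, Fin.last, h], hlast]
  -- total lengths
  have hts : G.tlen st = G.tlen f := by
    rw [DGraph.tlen, DGraph.tlen, Fin.sum_univ_castSucc, Fin.sum_univ_castSucc,
      Fin.sum_univ_castSucc (n := m)]
    rw [tst_m _ (by simp [Fin.last]), tst_hi _ (by simp [Fin.last]),
      tf_m _ (by simp [Fin.last]), key]
    have hcong : ∀ i : Fin m,
        G.edist (st ((i.castSucc.castSucc)).castSucc) (st (i.castSucc.castSucc).succ)
          = G.edist (f (i.castSucc.castSucc)) (f (i.castSucc.succ)) := by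
      intro i
      rw [tst_lo _ (by simp), tf_lo _ (by simp)]
      congr 1 <;> exact congrArg f (Fin.ext (by simp))
    rw [Finset.sum_congr rfl (fun i _ => hcong i), add_assoc]
  constructor
  · rintro ⟨⟨hpairs, hlen⟩, -⟩
    refine ⟨⟨?_, ?_⟩, ?_⟩
    · intro i
      rcases Nat.lt_or_ge (i : ℕ) m with h | h
      · rw [tf_lo i h]
        have := hpairs ⟨i, by omega⟩
        rwa [tst_lo _ (by simpa)] at this
      · have hh : (i : ℕ) = m := by omega
        rw [tf_m i hh, key]
        have h1 := hpairs ⟨m, by omega⟩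
        rw [tst_m _ (by simp)] at h1
        have h2 := hpairs ⟨m + 1, by omega⟩
        rw [tst_hi _ (by simp)] at h2
        constructor
        · intro hcon
          rw [add_eq_zero] at hcon
          exact h2.1 hcon.2
        · intro hcon
          rw [ENat.add_eq_top] at hcon
          rcases hcon with hc | hc
          · exact h1.2 hc
          · exact h2.2 hc
    · rw [← hts]; exact hlen
    · have h1 := (hpairs ⟨m, by omega⟩).1
      rw [tst_m _ (by simp)] at h1
      intro hcon
      apply h1
      rw [edist_eq_zero_iff]
      rw [show (⟨m + 1 - 1, by omega⟩ : Fin (m + 2)) = jm by simp [Fin.ext_iff, hjm]] at hcon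
      exact hcon
  · rintro ⟨⟨hpairs, hlen⟩, hne⟩
    have hne' : f jm ≠ pp x := by
      rwa [show (⟨m + 1 - 1, by omega⟩ : Fin (m + 2)) = jm by simp [Fin.ext_iff, hjm]] at hne
    have hfm := hpairs (Fin.last m)
    rw [tf_m _ (by simp [Fin.last])] at hfm
    refine ⟨⟨?_, by rw [hts]; exact hlen⟩, AP_sTuple hx ha hpA hf⟩
    intro i
    rcases Nat.lt_or_ge (i : ℕ) m with h | h
    · rw [tst_lo i h]
      have := hpairs ⟨i, by omega⟩
      rwa [tf_lo _ (by simpa)] at this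
    · rcases Nat.lt_or_ge (i : ℕ) (m + 1) with h' | h'
      · have hh : (i : ℕ) = m := by omega
        rw [tst_m i hh]
        refine ⟨edist_ne_zero_of_ne hne', ?_⟩
        intro htop
        apply hfm.2
        rw [key, htop]
        simp
      · have hh : (i : ℕ) = m + 1 := by omega
        rw [tst_hi i hh]
        refine ⟨edist_ne_zero_of_ne hpx, ?_⟩
        intro htop
        apply hfm.2
        rw [key, htop]
        simp

end AuxLemmas


section TupleIdentities

variable {V : Type}

lemma delMid_sTuple_castSucc (p : V → V) {k : ℕ} (g : Fin (k + 2) → V) (j : Fin k) :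
    delMid (sTuple p g) j.castSucc = sTuple p (delMid g j) := by
  funext i
  have hj : (j : ℕ) < k := j.isLt
  have hi : (i : ℕ) < k + 2 := i.isLt
  simp only [delMid_apply, sTuple_apply, Fin.coe_castSucc, Fin.val_succ, Fin.last]
  split_ifs <;>
    first
      | rfl
      | (exfalso; omega)
      | (exact congrArg g (Fin.ext (by simp [Fin.last]; omega)))
      | (exact congrArg (fun t => p (g t)) (Fin.ext (by simp [Fin.last]; omega)))

lemma delMid_sTuple_last (p : V → V) {k : ℕ} (g : Fin (k + 2) → V) :
    delMid (sTuple p g) (Fin.last k) = g := by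
  funext i
  have hi : (i : ℕ) < k + 2 := i.isLt
  simp only [delMid_apply, sTuple_apply, Fin.coe_castSucc, Fin.val_succ, Fin.last]
  split_ifs <;>
    first
      | rfl
      | (exfalso; omega)
      | (exact congrArg g (Fin.ext (by simp [Fin.last]; omega)))
      | (exact congrArg (fun t => p (g t)) (Fin.ext (by simp [Fin.last]; omega)))

lemma sTuple_delMid_last (p : V → V) {k : ℕ} (g : Fin (k + 3) → V)
    (h : g ⟨k + 1, by omega⟩ = p (g (Fin.last (k + 2)))) :
    sTuple p (delMid g (Fin.last k)) = g := by
  have hdl : delMid g (Fin.last k) (Fin.last (k + 1)) = g (Fin.last (k + 2)) := by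
    rw [delMid_apply, if_neg (by simp)]
    exact congrArg g (Fin.ext (by simp))
  funext i
  rw [sTuple_apply]
  by_cases h1 : (i : ℕ) < k + 1
  · rw [dif_pos h1, delMid_apply, if_pos (by simp; omega)]
    exact congrArg g (Fin.ext (by simp))
  · by_cases h2 : (i : ℕ) = k + 1
    · rw [dif_neg h1, if_pos h2, hdl, ← h]
      exact (congrArg g (Fin.ext (by simp [h2]))).symm
    · rw [dif_neg h1, if_neg h2, hdl]
      have h3 : (i : ℕ) = k + 2 := by omega
      exact congrArg g (Fin.ext (by simp [h3]))

lemma delMid_castSucc_sndlast {k : ℕ} (g : Fin (k + 3) → V) (j : Fin k) :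
    delMid g j.castSucc ⟨k, by omega⟩ = g ⟨k + 1, by omega⟩ := by
  rw [delMid_apply, if_neg (by simp)]
  exact congrArg g (Fin.ext (by simp))

lemma lsum_apply_single {R : Type} [CommRing R] {ι : Type} {M : Type} [AddCommGroup M]
    [Module R M] (F : ι → M) (b : ι) :
    Finsupp.lsum R (fun i => LinearMap.toSpanSingleton R M (F i))
      (Finsupp.single b (1 : R)) = F b := by
  rw [Finsupp.lsum_apply, Finsupp.sum_single_index] <;>
    simp [LinearMap.toSpanSingleton_apply]

lemma dR_single (R : Type) [CommRing R] (G : DGraph V) (P : ∀ k, (Fin (k + 1) → V) → Prop)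
    (k ℓ : ℕ) (b : RCb G P (k + 1) ℓ) :
    dR R G P k ℓ (Finsupp.single b 1) =
      ∑ j : Fin k, (-1 : R) ^ ((j : ℕ) + 1) •
        (if h : MCValid G k ℓ (delMid b.1 j) ∧ P k (delMid b.1 j) then
          Finsupp.single (⟨delMid b.1 j, h⟩ : RCb G P k ℓ) (1 : R) else 0) := by
  rw [dR]; exact lsum_apply_single _ _

lemma eR_single (R : Type) [CommRing R] (G : DGraph V) (P : ∀ k, (Fin (k + 1) → V) → Prop)
    (k ℓ : ℕ) (b : RCb G P k ℓ) (r : R) :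
    eR R G P k ℓ (Finsupp.single b r) = Finsupp.single b.1 r := by
  rw [eR]
  exact Finsupp.mapDomain_single

end TupleIdentities

section SDef

variable {V : Type} (R : Type) [CommRing R] (G : DGraph V) (A : Set V) (pp : V → V)
  (x a : V) (ℓ : ℕ)
variable (hco : IsCofib G A pp) (hx : x ∉ A) (hr : ∃ a ∈ A, G.Reaches a x) (ha : a ∈ A)

noncomputable def sAux (k : ℕ) :
    RMod R G (AP A a x) k ℓ →ₗ[R] RMod R G (AP A a x) (k + 1) ℓ :=
  Finsupp.lsum R fun b => LinearMap.toSpanSingleton R _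
    (if h : b.1 ⟨k - 1, Nat.lt_succ_of_le (Nat.sub_le k 1)⟩ ≠ pp (b.1 (Fin.last k)) then
      (-1 : R) ^ k • Finsupp.single
        (⟨sTuple pp b.1, (sTuple_equiv hco hx hr ha ℓ b.2.2).mpr
          ⟨b.2.1, by rwa [b.2.2.2.1] at h⟩⟩ : RCb G (AP A a x) (k + 1) ℓ) (1 : R)
    else 0)

lemma sAux_single_pos (k : ℕ) (b : RCb G (AP A a x) k ℓ)
    (h : b.1 ⟨k - 1, Nat.lt_succ_of_le (Nat.sub_le k 1)⟩ ≠ pp (b.1 (Fin.last k))) :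
    sAux R G A pp x a ℓ hco hx hr ha k (Finsupp.single b 1) =
      (-1 : R) ^ k • Finsupp.single
        (⟨sTuple pp b.1, (sTuple_equiv hco hx hr ha ℓ b.2.2).mpr
          ⟨b.2.1, by rwa [b.2.2.2.1] at h⟩⟩ : RCb G (AP A a x) (k + 1) ℓ) (1 : R) := by
  rw [sAux]; exact (lsum_apply_single _ _).trans (dif_pos h)

lemma sAux_single_neg (k : ℕ) (b : RCb G (AP A a x) k ℓ)
    (h : ¬ b.1 ⟨k - 1, Nat.lt_succ_of_le (Nat.sub_le k 1)⟩ ≠ pp (b.1 (Fin.last k))) :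
    sAux R G A pp x a ℓ hco hx hr ha k (Finsupp.single b 1) = 0 := by
  rw [sAux]; exact (lsum_apply_single _ _).trans (dif_neg h)


lemma sAux_single_pos' (k : ℕ) (v : Fin (k + 1) → V)
    (hv : MCValid G k ℓ v ∧ AP A a x k v)
    (h : v ⟨k - 1, Nat.lt_succ_of_le (Nat.sub_le k 1)⟩ ≠ pp (v (Fin.last k))) :
    sAux R G A pp x a ℓ hco hx hr ha k (Finsupp.single ⟨v, hv⟩ 1) =
      (-1 : R) ^ k • Finsupp.single
        (⟨sTuple pp v, (sTuple_equiv hco hx hr ha ℓ hv.2).mpr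
          ⟨hv.1, by rwa [hv.2.2.1] at h⟩⟩ : RCb G (AP A a x) (k + 1) ℓ) 1 := by
  rw [sAux]; exact (lsum_apply_single _ _).trans (dif_pos h)

lemma sAux_single_neg' (k : ℕ) (v : Fin (k + 1) → V)
    (hv : MCValid G k ℓ v ∧ AP A a x k v)
    (h : ¬ v ⟨k - 1, Nat.lt_succ_of_le (Nat.sub_le k 1)⟩ ≠ pp (v (Fin.last k))) :
    sAux R G A pp x a ℓ hco hx hr ha k (Finsupp.single ⟨v, hv⟩ 1) = 0 := by
  rw [sAux]; exact (lsum_apply_single _ _).trans (dif_neg h)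

lemma dR_single' (k : ℕ) (v : Fin (k + 2) → V)
    (hv : MCValid G (k + 1) ℓ v ∧ AP A a x (k + 1) v) :
    dR R G (AP A a x) k ℓ (Finsupp.single ⟨v, hv⟩ 1) =
      ∑ j : Fin k, (-1 : R) ^ ((j : ℕ) + 1) •
        (if h : MCValid G k ℓ (delMid v j) ∧ AP A a x k (delMid v j) then
          Finsupp.single (⟨delMid v j, h⟩ : RCb G (AP A a x) k ℓ) (1 : R) else 0) := by
  rw [dR]; exact lsum_apply_single _ _

lemma term_cancel (k : ℕ) (b : RCb G (AP A a x) (k + 1) ℓ) (j : Fin k) :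
    (-1 : R) ^ (k + 1) • ((-1 : R) ^ ((j.castSucc : ℕ) + 1) •
      ((if h : MCValid G (k + 1) ℓ (delMid (sTuple pp b.1) j.castSucc) ∧
          AP A a x (k + 1) (delMid (sTuple pp b.1) j.castSucc) then
        Finsupp.single
          ⟨delMid (sTuple pp b.1) j.castSucc, h⟩ (1 : R)
      else 0) : RMod R G (AP A a x) (k + 1) ℓ))
    + (-1 : R) ^ ((j : ℕ) + 1) • (sAux R G A pp x a ℓ hco hx hr ha k
        ((if h : MCValid G k ℓ (delMid b.1 j) ∧ AP A a x k (delMid b.1 j) then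
          Finsupp.single ⟨delMid b.1 j, h⟩ (1 : R)
        else 0) : RMod R G (AP A a x) k ℓ)) = 0 := by
  have hAPb : AP A a x (k + 1) b.1 := b.2.2
  have hAPd : AP A a x k (delMid b.1 j) := AP_delMid hAPb j
  have hdlast : delMid b.1 j (Fin.last k) = x := hAPd.2.1
  have heq := sTuple_equiv (pp := pp) hco hx hr ha ℓ hAPd
  simp only [delMid_sTuple_castSucc, Fin.coe_castSucc]
  by_cases h1 : MCValid G k ℓ (delMid b.1 j)
  · by_cases h2 : delMid b.1 j ⟨k - 1, Nat.lt_succ_of_le (Nat.sub_le k 1)⟩ ≠ pp x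
    · rw [dif_pos (heq.mpr ⟨h1, h2⟩), dif_pos (⟨h1, hAPd⟩ :
          MCValid G k ℓ (delMid b.1 j) ∧ AP A a x k (delMid b.1 j)),
        sAux_single_pos' R G A pp x a ℓ hco hx hr ha k (delMid b.1 j) ⟨h1, hAPd⟩
          (by rwa [hdlast])]
      rw [smul_smul, smul_smul, ← add_smul]
      have hs : (-1 : R) ^ (k + 1) * (-1) ^ ((j : ℕ) + 1)
          + (-1) ^ ((j : ℕ) + 1) * (-1) ^ k = 0 := by
        rw [pow_succ]
        ring
      rw [hs, zero_smul]
    · rw [dif_neg, dif_pos (⟨h1, hAPd⟩ :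
          MCValid G k ℓ (delMid b.1 j) ∧ AP A a x k (delMid b.1 j)),
        sAux_single_neg' R G A pp x a ℓ hco hx hr ha k (delMid b.1 j) ⟨h1, hAPd⟩
          (by rwa [hdlast])]
      · simp
      · intro hQ1
        exact h2 (heq.mp hQ1).2
  · rw [dif_neg, dif_neg]
    · simp
    · exact fun hQ2 => h1 hQ2.1
    · exact fun hQ1 => h1 (heq.mp hQ1).1

lemma homotopy_basis (k : ℕ) (hne : a ≠ pp x ∨ (ℓ : ℕ∞) ≠ G.edist a x)
    (b : RCb G (AP A a x) (k + 1) ℓ) :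
    dR R G (AP A a x) (k + 1) ℓ
        (sAux R G A pp x a ℓ hco hx hr ha (k + 1) (Finsupp.single b 1))
      + sAux R G A pp x a ℓ hco hx hr ha k
          (dR R G (AP A a x) k ℓ (Finsupp.single b 1))
      = Finsupp.single b 1 := by
  have hpA : pp x ∈ A := (hco.2 x hr).1
  have hlast : b.1 (Fin.last (k + 1)) = x := b.2.2.2.1
  by_cases hC : b.1 ⟨k + 1 - 1, by omega⟩ ≠ pp (b.1 (Fin.last (k + 1)))
  · -- Case A : second-to-last entry differs from pp x
    rw [sAux_single_pos R G A pp x a ℓ hco hx hr ha (k + 1) b hC, map_smul,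
      dR_single' R G A x a ℓ (k + 1) (sTuple pp b.1),
      dR_single R G (AP A a x) k ℓ b, map_sum]
    simp only [map_smul]
    rw [Fin.sum_univ_castSucc (n := k), smul_add, add_right_comm, Finset.smul_sum,
      ← Finset.sum_add_distrib,
      Finset.sum_eq_zero (fun j _ => term_cancel R G A pp x a ℓ hco hx hr ha k b j),
      zero_add]
    simp only [delMid_sTuple_last, Fin.val_last]
    rw [dif_pos b.2, smul_smul]
    rw [show ((-1 : R) ^ (k + 1) * (-1) ^ (k + 1)) = 1 by rw [← mul_pow]; norm_num,
      one_smul]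
  · -- Case B : second-to-last entry equals pp x
    have hCeq : b.1 ⟨k + 1 - 1, by omega⟩ = pp x := by
      have := not_not.mp hC
      rwa [hlast] at this
    rw [sAux_single_neg R G A pp x a ℓ hco hx hr ha (k + 1) b hC, map_zero, zero_add,
      dR_single R G (AP A a x) k ℓ b, map_sum]
    simp only [map_smul]
    rcases k with _ | m
    · exfalso
      have hax : b.1 0 = a := b.2.2.1
      have h1 : a = pp x := by
        rw [← hax]
        exact hCeq
      rcases hne with h | h
      · exact h h1
      · apply h
        have ht := b.2.1.2
        rw [DGraph.tlen, Fin.sum_univ_one] at ht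
        rw [show Fin.castSucc (0 : Fin 1) = (0 : Fin 2) from rfl,
          show Fin.succ (0 : Fin 1) = Fin.last 1 from rfl, hax, hlast] at ht
        exact ht.symm
    · -- k = m + 1
      have hb2 : b.1 ⟨m + 1, by omega⟩ = pp (b.1 (Fin.last (m + 2))) := by
        rw [hlast]
        exact hCeq
      rw [Fin.sum_univ_castSucc (n := m)]
      have hcast0 : ∀ j : Fin m, (-1 : R) ^ ((j.castSucc : ℕ) + 1) •
          (sAux R G A pp x a ℓ hco hx hr ha (m + 1)
            (if h : MCValid G (m + 1) ℓ (delMid b.1 j.castSucc) ∧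
                AP A a x (m + 1) (delMid b.1 j.castSucc) then
              Finsupp.single
                (⟨delMid b.1 j.castSucc, h⟩ : RCb G (AP A a x) (m + 1) ℓ) (1 : R)
            else 0)) = 0 := by
        intro j
        by_cases hq : MCValid G (m + 1) ℓ (delMid b.1 j.castSucc) ∧
            AP A a x (m + 1) (delMid b.1 j.castSucc)
        · rw [dif_pos hq, sAux_single_neg' R G A pp x a ℓ hco hx hr ha (m + 1)
            (delMid b.1 j.castSucc) hq (not_not.mpr (by
              rw [hq.2.2.1]
              exact (delMid_castSucc_sndlast b.1 j).trans hCeq)), smul_zero]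
        · rw [dif_neg hq, map_zero, smul_zero]
      rw [Finset.sum_eq_zero (fun j _ => hcast0 j), zero_add]
      -- the last face gives back b
      have hstf : sTuple pp (delMid b.1 (Fin.last m)) = b.1 :=
        sTuple_delMid_last pp b.1 hb2
      have hAPf : AP A a x (m + 1) (delMid b.1 (Fin.last m)) := AP_delMid b.2.2 _
      have heq := sTuple_equiv (pp := pp) hco hx hr ha ℓ hAPf
      have hsb : MCValid G (m + 2) ℓ (sTuple pp (delMid b.1 (Fin.last m))) ∧
          AP A a x (m + 2) (sTuple pp (delMid b.1 (Fin.last m))) := by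
        rw [hstf]
        exact b.2
      obtain ⟨hMV, hcond⟩ := heq.mp hsb
      rw [dif_pos (⟨hMV, hAPf⟩ : MCValid G (m + 1) ℓ (delMid b.1 (Fin.last m)) ∧
          AP A a x (m + 1) (delMid b.1 (Fin.last m))),
        sAux_single_pos' R G A pp x a ℓ hco hx hr ha (m + 1) (delMid b.1 (Fin.last m))
          ⟨hMV, hAPf⟩ (by rwa [hAPf.2.1]), smul_smul, Fin.val_last]
      rw [show ((-1 : R) ^ (m + 1) * (-1) ^ (m + 1)) = 1 by rw [← mul_pow]; norm_num,
        one_smul]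
      exact congrArg (fun y => Finsupp.single y (1 : R)) (Subtype.ext hstf)

end SDef

/-- let `A ↪ X` be a cofibration, `x ∉ A` in the reach of `A`, `a ∈ A`,
and assume `a ≠ π x` or `ℓ ≠ d(a,x)`.  Then `A_{*,ℓ}(a,x)` is acyclic, with explicit
contracting homotopy `s(x₀,...,x_k) = (-1)^k (x₀,...,x_{k-1},π(x_k),x_k)` if
`x_{k-1} ≠ π(x_k)` and `0` otherwise. -/
theorem cofib_subcomplex_acyclic (R : Type) [CommRing R] (G : DGraph V) (A : Set V)
    (π : V → V) (hco : IsCofib G A π) (x : V) (hx : x ∉ A)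
    (hr : ∃ a ∈ A, G.Reaches a x) (a : V) (ha : a ∈ A) (ℓ : ℕ)
    (hne : a ≠ π x ∨ (ℓ : ℕ∞) ≠ G.edist a x) :
    (∃ s : ∀ k, RMod R G (AP A a x) k ℓ →ₗ[R] RMod R G (AP A a x) (k + 1) ℓ,
      -- `s` is given on basis elements by the stated formula:
      (∀ k (b : RCb G (AP A a x) k ℓ),
        eR R G (AP A a x) (k + 1) ℓ (s k (Finsupp.single b 1)) =
          if b.1 ⟨k - 1, by omega⟩ ≠ π (b.1 (Fin.last k)) then
            (-1 : R) ^ k • Finsupp.single (sTuple π b.1) (1 : R)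
          else 0) ∧
      -- `s` is a contracting homotopy: `∂s + s∂ = Id`:
      (∀ c : RMod R G (AP A a x) 0 ℓ, dR R G (AP A a x) 0 ℓ (s 0 c) = c) ∧
      (∀ k (c : RMod R G (AP A a x) (k + 1) ℓ),
        dR R G (AP A a x) (k + 1) ℓ (s (k + 1) c) + s k (dR R G (AP A a x) k ℓ c) = c)) ∧
    -- hence the complex is acyclic:
    (∀ k (c : RH R G (AP A a x) k ℓ), c = 0) := by
  classical
  have hhom : ∀ k (c : RMod R G (AP A a x) (k + 1) ℓ),
      dR R G (AP A a x) (k + 1) ℓ (sAux R G A π x a ℓ hco hx hr ha (k + 1) c)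
        + sAux R G A π x a ℓ hco hx hr ha k (dR R G (AP A a x) k ℓ c) = c := by
    intro k
    have hext : ((dR R G (AP A a x) (k + 1) ℓ).comp
          (sAux R G A π x a ℓ hco hx hr ha (k + 1))
        + (sAux R G A π x a ℓ hco hx hr ha k).comp (dR R G (AP A a x) k ℓ))
        = LinearMap.id := by
      apply Finsupp.lhom_ext
      intro bb r
      have h1 := homotopy_basis R G A π x a ℓ hco hx hr ha k hne bb
      have hr2 : (Finsupp.single bb r) = r • Finsupp.single bb (1 : R) := by
        rw [Finsupp.smul_single, smul_eq_mul, mul_one]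
      simp only [LinearMap.add_apply, LinearMap.comp_apply, LinearMap.id_apply, hr2,
        map_smul]
      rw [h1]
    intro c
    have := LinearMap.congr_fun hext c
    simpa using this
  have hzero0 : ∀ c : RMod R G (AP A a x) 0 ℓ, c = 0 := by
    intro c
    ext bb
    have hax : a = x := bb.2.2.1.symm.trans bb.2.2.2.1
    exact absurd (hax ▸ ha) hx
  refine ⟨⟨fun k => sAux R G A π x a ℓ hco hx hr ha k, ?_, ?_, ?_⟩, ?_⟩
  · -- formula for s on basis elements
    intro k bb
    by_cases h : bb.1 ⟨k - 1, by omega⟩ ≠ π (bb.1 (Fin.last k))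
    · rw [if_pos h]
      exact (congrArg (eR R G (AP A a x) (k + 1) ℓ)
        (sAux_single_pos R G A π x a ℓ hco hx hr ha k bb h)).trans
        ((map_smul _ _ _).trans (congrArg _ (eR_single _ _ _ _ _ _ _)))
    · rw [if_neg h, sAux_single_neg R G A π x a ℓ hco hx hr ha k bb h, map_zero]
  · -- degree-0 identity (the degree-0 chain group is trivial)
    intro c
    rw [hzero0 c, map_zero, map_zero]
  · -- homotopy identity in positive degrees
    intro k c
    exact hhom k c
  · -- acyclicity
    intro k c
    obtain ⟨y, rfl⟩ := Submodule.Quotient.mk_surjective _ c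
    rw [Submodule.Quotient.mk_eq_zero, Submodule.mem_comap]
    rcases k with _ | m
    · refine ⟨0, ?_⟩
      rw [map_zero]
      exact (hzero0 _).symm
    · have hy : dR R G (AP A a x) m ℓ y.1 = 0 := LinearMap.mem_ker.mp y.2
      refine ⟨sAux R G A π x a ℓ hco hx hr ha (m + 1) y.1, ?_⟩
      show dR R G (AP A a x) (m + 1) ℓ (sAux R G A π x a ℓ hco hx hr ha (m + 1) y.1)
        = y.1
      have := hhom m y.1
      rwa [hy, map_zero, add_zero] at this
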